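/- For every nonzero rational number r, the number e^r is irrational; consequently, ln(r) is irrational for every positive rational r ≠ 1. -/

import Mathlib

open Polynomial Nat

noncomputable def NP (k : ℕ) : ℤ[X] := X ^ k * (1 - X) ^ k

lemma NP_comp (k : ℕ) : (NP k).comp (1 - X) = NP k := by
  simp [NP, sub_sub_cancel, mul_comm]

lemma iterD (i : ℕ) (p : ℤ[X]) :
    derivative^[i] (p.comp (1 - X)) = (-1) ^ i * (derivative^[i] p).comp (1 - X) := by
  induction i generalizing p with
  | zero => simp
  | succ n ih =>
    rw [Function.iterate_succ_apply, Function.iterate_succ_apply]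
    have h : derivative (p.comp (1 - X)) = -((derivative p).comp (1 - X)) := by
      rw [derivative_comp]; simp
    rw [h, iterate_derivative_neg, ih, pow_succ]
    ring

lemma natDegree_NP_le (k : ℕ) : (NP k).natDegree ≤ 2 * k := by
  refine le_trans (natDegree_mul_le) ?_
  have h1 : (X ^ k : ℤ[X]).natDegree ≤ k := by simp
  have h2 : ((1 - X : ℤ[X]) ^ k).natDegree ≤ k := by
    refine le_trans (natDegree_pow_le) ?_
    have : (1 - X : ℤ[X]).natDegree ≤ 1 :=
      le_trans (natDegree_sub_le _ _) (by simp)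
    nlinarith
  omega

lemma dvd_eval_zero (k i : ℕ) : (k ! : ℤ) ∣ (derivative^[i] (NP k)).eval 0 := by
  rw [← coeff_zero_eq_eval_zero, coeff_iterate_derivative]
  rcases lt_or_ge i k with h | h
  · have : (NP k).coeff (0 + i) = 0 := by
      have hd : (X : ℤ[X]) ^ k ∣ NP k := ⟨(1 - X) ^ k, rfl⟩
      exact (X_pow_dvd_iff.mp hd) _ (by omega)
    rw [nsmul_eq_mul]
    simp only [zero_add] at this ⊢
    simp [this]
  · have : ((0 + i).descFactorial i : ℤ) = (i ! : ℤ) := by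
      simp [Nat.descFactorial_self]
    rw [nsmul_eq_mul, this]
    exact Dvd.dvd.mul_right (Int.natCast_dvd_natCast.mpr (Nat.factorial_dvd_factorial h)) _

lemma dvd_eval_one (k i : ℕ) : (k ! : ℤ) ∣ (derivative^[i] (NP k)).eval 1 := by
  have h := iterD i (NP k)
  rw [NP_comp] at h
  have h0 := congrArg (eval 0) h
  simp only [eval_mul, eval_pow, eval_neg, eval_one, eval_comp, eval_sub] at h0
  have : (derivative^[i] (NP k)).eval 1 = (-1)^i * (derivative^[i] (NP k)).eval 0 := by
    simp only [eval_X, sub_zero] at h0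
    rcases Nat.even_or_odd i with he | ho
    · rw [he.neg_one_pow] at h0 ⊢; linarith [h0]
    · rw [ho.neg_one_pow] at h0 ⊢; linarith [h0]
  rw [this]
  exact Dvd.dvd.mul_left (dvd_eval_zero k i) _
noncomputable def FP (n k : ℕ) : ℤ[X] :=
  ∑ i ∈ Finset.range (2*k+1), C ((-1)^i * (n:ℤ)^(2*k-i)) * derivative^[i] (NP k)


lemma FP_ode (n k : ℕ) :
    C (n:ℤ) * FP n k + derivative (FP n k) = C ((n:ℤ)^(2*k+1)) * NP k := by
  set t : ℕ → ℤ[X] := fun i => C ((-1)^i * (n:ℤ)^(2*k+1-i)) * derivative^[i] (NP k) with ht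
  have key : C (n:ℤ) * FP n k + derivative (FP n k)
      = ∑ i ∈ Finset.range (2*k+1), (t i - t (i+1)) := by
    rw [FP, Finset.mul_sum, derivative_sum, ← Finset.sum_add_distrib]
    refine Finset.sum_congr rfl fun i hi => ?_
    rw [Finset.mem_range] at hi
    have h1 : 2*k+1-i = (2*k-i)+1 := by omega
    have h2 : 2*k+1-(i+1) = 2*k-i := by omega
    simp only [ht, h1, h2, derivative_C_mul, Function.iterate_succ_apply', pow_succ]
    simp only [C_mul, C_pow, C_neg, C_1, map_natCast]
    ring
  rw [key, Finset.sum_range_sub']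
  have hz : derivative^[2*k+1] (NP k) = 0 :=
    iterate_derivative_eq_zero (by have := natDegree_NP_le k; omega)
  simp [ht, hz]
noncomputable def Nr (k : ℕ) : ℝ[X] := (NP k).map (Int.castRingHom ℝ)
noncomputable def Fr (n k : ℕ) : ℝ[X] := (FP n k).map (Int.castRingHom ℝ)

lemma contNr (n k : ℕ) : Continuous fun x : ℝ => Real.exp (n*x) * (Nr k).eval x :=
  (Real.continuous_exp.comp (continuous_const.mul continuous_id)).mul
    (Polynomial.continuous _)

lemma integral_eq (n k : ℕ) :
    ∫ x in (0:ℝ)..1, (n:ℝ)^(2*k+1) * (Real.exp (n*x) * (Nr k).eval x)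
      = Real.exp n * eval 1 (Fr n k) - eval 0 (Fr n k) := by
  have hF : ∀ x : ℝ, HasDerivAt (fun x => Real.exp (n*x) * eval x (Fr n k))
      ((n:ℝ)^(2*k+1) * (Real.exp (n*x) * eval x (Nr k))) x := by
    intro x
    have h1 : HasDerivAt (fun x : ℝ => Real.exp (n*x)) ((n:ℝ) * Real.exp (n*x)) x := by
      simpa [mul_comm] using (((hasDerivAt_id x).const_mul (n:ℝ)).exp)
    have h := h1.mul ((Fr n k).hasDerivAt x)
    convert h using 1
    case e'_4 => rfl
    case e'_5 => rfl
    case e'_8 => rfl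
    have hode := congrArg (fun p : ℤ[X] => eval x (p.map (Int.castRingHom ℝ))) (FP_ode n k)
    simp only [Polynomial.map_add, Polynomial.map_mul, derivative_map, eval_add, eval_mul,
      map_C, eval_C, Int.cast_pow, Int.cast_natCast] at hode
    rw [← derivative_map] at hode
    show (n:ℝ)^(2*k+1) * (Real.exp (n*x) * eval x (Nr k)) =
      (n:ℝ) * Real.exp (n*x) * eval x (Fr n k) + Real.exp (n*x) * eval x (derivative (Fr n k))
    rw [show ((FP n k).map (Int.castRingHom ℝ)) = Fr n k from rfl,
        show ((NP k).map (Int.castRingHom ℝ)) = Nr k from rfl] at hode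
    simp only [map_pow, map_natCast] at hode
    linear_combination (-Real.exp ((n:ℝ)*x)) * hode
  have hint : IntervalIntegrable
      (fun x => (n:ℝ)^(2*k+1) * (Real.exp (n*x) * eval x (Nr k))) MeasureTheory.volume 0 1 :=
    (continuous_const.mul (contNr n k)).intervalIntegrable 0 1
  have := intervalIntegral.integral_eq_sub_of_hasDerivAt (fun x _ => hF x) hint
  simpa using this
lemma FP_dvd0 (n k : ℕ) : (k ! : ℤ) ∣ eval 0 (FP n k) := by
  rw [FP, eval_finset_sum]
  exact Finset.dvd_sum fun i _ => by rw [eval_mul]; exact (dvd_eval_zero k i).mul_left _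

lemma FP_dvd1 (n k : ℕ) : (k ! : ℤ) ∣ eval 1 (FP n k) := by
  rw [FP, eval_finset_sum]
  exact Finset.dvd_sum fun i _ => by rw [eval_mul]; exact (dvd_eval_one k i).mul_left _

lemma Nr_eval (k : ℕ) (x : ℝ) : eval x (Nr k) = x^k * (1-x)^k := by
  simp [Nr, NP]

lemma J_pos (n k : ℕ) : 0 < ∫ x in (0:ℝ)..1, Real.exp (n*x) * eval x (Nr k) :=
  intervalIntegral.intervalIntegral_pos_of_pos_on ((contNr n k).intervalIntegrable 0 1)
    (fun x hx => by
      rw [Nr_eval]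
      have h1 : (0:ℝ) < 1 - x := by linarith [hx.2]
      exact mul_pos (Real.exp_pos _) (mul_pos (pow_pos hx.1 k) (pow_pos h1 k))) one_pos

lemma J_le (n k : ℕ) :
    ∫ x in (0:ℝ)..1, Real.exp (n*x) * eval x (Nr k) ≤ Real.exp n := by
  have h : ∀ x ∈ Set.Icc (0:ℝ) 1, Real.exp (n*x) * eval x (Nr k) ≤ Real.exp n := by
    intro x hx
    rw [Nr_eval]
    have hx0 := hx.1
    have hx1 := hx.2
    have h1 : x^k * (1-x)^k ≤ 1 := by
      have : x^k ≤ 1 := pow_le_one₀ hx0 hx1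
      have h2 : (1-x)^k ≤ 1 := pow_le_one₀ (by linarith) (by linarith)
      nlinarith [pow_nonneg hx0 k, pow_nonneg (by linarith : (0:ℝ) ≤ 1-x) k]
    have h2 : Real.exp (n*x) ≤ Real.exp n := by
      apply Real.exp_le_exp.mpr
      nlinarith [Nat.cast_nonneg (α := ℝ) n]
    nlinarith [Real.exp_pos ((n:ℝ)*x), pow_nonneg hx0 k,
      pow_nonneg (by linarith : (0:ℝ) ≤ 1-x) k, Real.exp_pos (n:ℝ)]
  calc ∫ x in (0:ℝ)..1, Real.exp (n*x) * eval x (Nr k)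
      ≤ ∫ _x in (0:ℝ)..1, Real.exp n :=
        intervalIntegral.integral_mono_on zero_le_one
          ((contNr n k).intervalIntegrable 0 1) intervalIntegrable_const h
    _ = Real.exp n := by simp

lemma irr_exp_nat (m : ℕ) (hm : 0 < m) : Irrational (Real.exp m) := by
  rw [Irrational]
  rintro ⟨q, hq⟩
  have hqpos : (0:ℝ) < (q:ℝ) := hq ▸ Real.exp_pos _
  have hab : ((q.den : ℝ)) * Real.exp m = (q.num : ℝ) := by
    rw [← hq]
    exact_mod_cast congrArg (Rat.cast : ℚ → ℝ) (mul_comm (q.den : ℚ) q ▸ Rat.mul_den_eq_num q)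
  have hbpos : (0:ℝ) < q.den := by exact_mod_cast q.pos
  -- choose k
  have htend := FloorSemiring.tendsto_pow_div_factorial_atTop ((m:ℝ)^2)
  have hC : (0:ℝ) < (q.den : ℝ) * m * Real.exp m := by positivity
  obtain ⟨k, hk⟩ := (htend.eventually (gt_mem_nhds
    (by positivity : (0:ℝ) < 1/((q.den : ℝ) * m * Real.exp m)))).exists
  -- hk : (m^2)^k / k! < 1/C
  set J := ∫ x in (0:ℝ)..1, Real.exp (m*x) * eval x (Nr k) with hJ
  have hJpos := J_pos m k
  have hJle := J_le m k
  have hmain : (m:ℝ)^(2*k+1) * J = Real.exp m * eval 1 (Fr m k) - eval 0 (Fr m k) := by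
    rw [hJ, ← intervalIntegral.integral_const_mul]
    exact integral_eq m k
  -- evals of Fr are casts of integer evals
  have hF1 : eval 1 (Fr m k) = ((eval 1 (FP m k) : ℤ) : ℝ) := by
    simp [Fr, eval_map, eval₂_at_one]
  have hF0 : eval 0 (Fr m k) = ((eval 0 (FP m k) : ℤ) : ℝ) := by
    rw [Fr, ← coeff_zero_eq_eval_zero, ← coeff_zero_eq_eval_zero, coeff_map]
    simp
  set F1 : ℤ := eval 1 (FP m k)
  set F0 : ℤ := eval 0 (FP m k)
  set z : ℤ := q.num * F1 - (q.den : ℤ) * F0 with hz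
  have hzR : (z : ℝ) = (q.den : ℝ) * ((m:ℝ)^(2*k+1) * J) := by
    rw [hz]
    push_cast
    rw [hmain, hF1, hF0]
    push_cast
    linear_combination (-(F1:ℝ)) * hab
  have hzpos : (0:ℤ) < z := by
    have : (0:ℝ) < (z:ℝ) := by
      rw [hzR]
      have : (0:ℝ) < (m:ℝ)^(2*k+1) := by positivity
      positivity
    exact_mod_cast this
  have hdvd : (k ! : ℤ) ∣ z := by
    exact dvd_sub ((FP_dvd1 m k).mul_left _) ((FP_dvd0 m k).mul_left _)
  have hfaczle : (k ! : ℤ) ≤ z := Int.le_of_dvd hzpos hdvd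
  have hfacR : ((k ! : ℝ)) ≤ (q.den : ℝ) * ((m:ℝ)^(2*k+1) * Real.exp m) := by
    calc ((k ! : ℝ)) ≤ (z : ℝ) := by exact_mod_cast hfaczle
      _ = (q.den : ℝ) * ((m:ℝ)^(2*k+1) * J) := hzR
      _ ≤ (q.den : ℝ) * ((m:ℝ)^(2*k+1) * Real.exp m) := by
          have hp : (0:ℝ) < (m:ℝ)^(2*k+1) := by positivity
          gcongr
  -- contradiction with hk
  have hpowsplit : (m:ℝ)^(2*k+1) = (m:ℝ) * ((m:ℝ)^2)^k := by
    rw [← pow_mul]; ring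
  rw [hpowsplit] at hfacR
  have hfacpos : (0:ℝ) < (k ! : ℝ) := by positivity
  rw [div_lt_div_iff₀ hfacpos hC] at hk
  nlinarith [hk, hfacR]

lemma irr_exp_int (m : ℤ) (hm : m ≠ 0) : Irrational (Real.exp m) := by
  rcases hm.lt_or_gt with h | h
  · have h2 : Irrational (Real.exp ((-m).toNat : ℕ)) := irr_exp_nat _ (by omega)
    have he : (((-m).toNat : ℕ) : ℝ) = -(m:ℝ) := by
      have : ((-m).toNat : ℤ) = -m := Int.toNat_of_nonneg (by omega)
      exact_mod_cast congrArg (Int.cast : ℤ → ℝ) this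
    rw [he, Real.exp_neg] at h2
    have h3 := h2.inv
    rwa [inv_inv] at h3
  · have h2 : Irrational (Real.exp (m.toNat : ℕ)) := irr_exp_nat _ (by omega)
    have he : ((m.toNat : ℕ) : ℝ) = (m:ℝ) := by
      exact_mod_cast congrArg (Int.cast : ℤ → ℝ) (Int.toNat_of_nonneg h.le)
    rwa [he] at h2

theorem stmt_19 :
    (∀ r : ℚ, r ≠ 0 → Irrational (Real.exp r)) ∧
    (∀ r : ℚ, 0 < r → r ≠ 1 → Irrational (Real.log r)) := by
  have hexp : ∀ r : ℚ, r ≠ 0 → Irrational (Real.exp r) := by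
    intro r hr
    rw [Irrational]
    rintro ⟨s, hs⟩
    apply irr_exp_int r.num (Rat.num_ne_zero.mpr hr)
    refine ⟨s ^ r.den, ?_⟩
    have h1 : ((r.num : ℤ) : ℝ) = (r.den : ℝ) * (r:ℝ) := by
      have := congrArg (Rat.cast : ℚ → ℝ) (Rat.mul_den_eq_num r)
      push_cast at this ⊢
      linarith [this]
    rw [h1, Real.exp_nat_mul, ← hs]
    push_cast
    ring
  refine ⟨hexp, ?_⟩
  intro r hr h1
  have hrpos : (0:ℝ) < (r:ℝ) := by exact_mod_cast hr
  rw [Irrational]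
  rintro ⟨s, hs⟩
  by_cases h0 : s = 0
  · subst h0
    have : (r:ℝ) = 1 := by
      rw [← Real.exp_log hrpos, ← hs]
      simp
    exact h1 (by exact_mod_cast this)
  · exact hexp s h0 ⟨r, by rw [hs, Real.exp_log hrpos]⟩
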